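/- With e_{2k} ∈ M_{2^k}(Pol(ℝ_q^{2n+1})) defined recursively by e_0 = 1-y and e_{2(k+1)} = [[e_{2k}, C_{2k}x_{k+1}*],[C_{2k}x_{k+1}, 1-φ_n(e_{2k})]] where φ_n(y) = q²y, the matrix trace satisfies Tr(e_{2k}) = 2^{k-1} - (1-q²)^k y for all k ≥ 1. Consequently the projector G_{2n} on the quantum sphere satisfies Tr(G_{2n}) = 2^{n-1} - (1-q²)^n t. -/

import Mathlib

open Matrix

/-- Identification `Fin 2^k ⊕ Fin 2^k ≃ Fin 2^{k+1}` used for block matrices. -/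
def powEquiv (k : ℕ) : Fin (2 ^ k) ⊕ Fin (2 ^ k) ≃ Fin (2 ^ (k + 1)) :=
  finSumFinEquiv.trans (finCongr (by rw [pow_succ, mul_two]))

/-- The scalar matrices `C_{2k} ∈ M_{2^k}(ℂ)`: `C_0 = q`,
`C_{2(k+1)} = diag(C_{2k}, q C_{2k})`. -/
noncomputable def cMat (q : ℝ) : (k : ℕ) → Matrix (Fin (2 ^ k)) (Fin (2 ^ k)) ℂ
  | 0 => (q : ℂ) • 1
  | k + 1 =>
    Matrix.reindex (powEquiv k) (powEquiv k)
      (Matrix.fromBlocks (cMat q k) 0 0 ((q : ℂ) • cMat q k))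

/-- The recursively defined matrices `e_{2k} ∈ M_{2^k}(R)`: `e_0 = 1 - y` and
`e_{2(k+1)} = [[e_{2k}, C_{2k} x_{k+1}*], [C_{2k} x_{k+1}, 1 - φ(e_{2k})]]`
(0-indexed: the step from `k` to `k+1` uses `x k`, `xs k = x k *`). -/
noncomputable def eMat {R : Type*} [Ring R] [Algebra ℂ R] (q : ℝ) (y : R)
    (x xs : ℕ → R) (φ : R →ₐ[ℂ] R) :
    (k : ℕ) → Matrix (Fin (2 ^ k)) (Fin (2 ^ k)) R
  | 0 => (1 - y) • 1
  | k + 1 =>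
    Matrix.reindex (powEquiv k) (powEquiv k)
      (Matrix.fromBlocks (eMat q y x xs φ k)
        ((cMat q k).map (algebraMap ℂ R) * (xs k • 1))
        ((cMat q k).map (algebraMap ℂ R) * (x k • 1))
        (1 - (eMat q y x xs φ k).map φ))

lemma trace_reindex' {R m n : Type*} [AddCommMonoid R] [Fintype m] [Fintype n]
    [DecidableEq m] [DecidableEq n] (e : m ≃ n) (M : Matrix m m R) :
    Matrix.trace (Matrix.reindex e e M) = Matrix.trace M := by
  simp only [Matrix.trace, Matrix.reindex_apply, Matrix.diag, Matrix.submatrix_apply]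
  exact Equiv.sum_comp e.symm (fun j => M j j)

lemma trace_fromBlocks' {R m n : Type*} [AddCommMonoid R] [Fintype m] [Fintype n]
    (A : Matrix m m R) (B : Matrix m n R) (C : Matrix n m R) (D : Matrix n n R) :
    Matrix.trace (Matrix.fromBlocks A B C D) = Matrix.trace A + Matrix.trace D := by
  simp [Matrix.trace, Matrix.diag, Fintype.sum_sum_type]

lemma trace_map' {R m : Type*} [Ring R] [Algebra ℂ R] [Fintype m]
    (M : Matrix m m R) (f : R →ₐ[ℂ] R) :
    Matrix.trace (M.map f) = f (Matrix.trace M) := by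
  simp [Matrix.trace, Matrix.diag, map_sum]

theorem eMat_trace {R : Type*} [Ring R] [Algebra ℂ R]
    (q : ℝ) (hq0 : 0 < q) (hq1 : q < 1) (n : ℕ) (hn : 1 ≤ n)
    (y : R) (x xs : ℕ → R) (φ : R →ₐ[ℂ] R)
    (hφx : ∀ i, φ (x i) = ((q : ℂ) ^ 2) • x i)
    (hφxs : ∀ i, φ (xs i) = ((q : ℂ) ^ 2) • xs i)
    (hφy : φ y = ((q : ℂ) ^ 2) • y) :
    (∀ k, 1 ≤ k → k ≤ n →
      Matrix.trace (eMat q y x xs φ k)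
        = (2 ^ (k - 1) : R) - ((1 - (q : ℂ) ^ 2) ^ k) • y) ∧
    Matrix.trace (eMat q y x xs φ n)
      = (2 ^ (n - 1) : R) - ((1 - (q : ℂ) ^ 2) ^ n) • y := by
  have key : ∀ k, 1 ≤ k →
      Matrix.trace (eMat q y x xs φ k)
        = (2 ^ (k - 1) : R) - ((1 - (q : ℂ) ^ 2) ^ k) • y := by
    intro k hk
    induction k with
    | zero => omega
    | succ k ih =>
      have step : Matrix.trace (eMat q y x xs φ (k + 1))
          = Matrix.trace (eMat q y x xs φ k) + ((2 ^ k : ℕ) : R)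
            - φ (Matrix.trace (eMat q y x xs φ k)) := by
        rw [show eMat q y x xs φ (k + 1) =
          Matrix.reindex (powEquiv k) (powEquiv k)
            (Matrix.fromBlocks (eMat q y x xs φ k)
              ((cMat q k).map (algebraMap ℂ R) * (xs k • 1))
              ((cMat q k).map (algebraMap ℂ R) * (x k • 1))
              (1 - (eMat q y x xs φ k).map φ)) from rfl]
        rw [trace_reindex', trace_fromBlocks', Matrix.trace_sub, Matrix.trace_one,
          _root_.trace_map' _ φ]
        simp only [Fintype.card_fin]
        abel
      rcases Nat.eq_or_lt_of_le hk with h1 | h1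
      · -- k + 1 = 1, i.e. k = 0
        have hk0 : k = 0 := by omega
        subst hk0
        rw [step]
        have h0 : Matrix.trace (eMat q y x xs φ 0) = 1 - y := by
          show Matrix.trace ((1 - y) • (1 : Matrix (Fin (2 ^ 0)) (Fin (2 ^ 0)) R)) = 1 - y
          rw [Matrix.trace_smul, Matrix.trace_one]
          simp
        rw [h0, map_sub, _root_.map_one, hφy]
        have hs : (1 - (q : ℂ) ^ 2) ^ (0 + 1) • y = y - ((q : ℂ) ^ 2) • y := by
          rw [zero_add, pow_one, sub_smul, one_smul]
        rw [hs]
        norm_num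
        abel
      · have hk1 : 1 ≤ k := by omega
        rw [step, ih hk1]
        have hφ2 : φ ((2 ^ (k - 1) : R) - ((1 - (q : ℂ) ^ 2) ^ k) • y)
            = (2 ^ (k - 1) : R) - ((1 - (q : ℂ) ^ 2) ^ k) • (((q : ℂ) ^ 2) • y) := by
          rw [map_sub, _root_.map_smul, hφy, map_pow]
          simp [map_ofNat]
        rw [hφ2]
        have hpow : (2 ^ k : ℕ) = 2 ^ (k - 1) + 2 ^ (k - 1) := by
          rw [← two_mul, ← pow_succ']
          congr 1
          omega
        have h2 : ((2 ^ k : ℕ) : R) = 2 ^ (k - 1) + 2 ^ (k - 1) := by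
          rw [hpow]; push_cast; ring
        have h3 : (2 : R) ^ k = 2 ^ (k - 1) + 2 ^ (k - 1) := by
          rw [← two_mul, ← pow_succ']
          congr 1
          omega
        simp only [Nat.add_sub_cancel]
        rw [h2, h3, show (1 - (q : ℂ) ^ 2) ^ (k + 1)
            = (1 - (q : ℂ) ^ 2) ^ k * (1 - (q : ℂ) ^ 2) from pow_succ _ _,
          smul_smul, mul_sub, mul_one, sub_smul]
        abel
  exact ⟨fun k hk _ => key k hk, key n hn⟩
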